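/- Let d≥1 and equip ℤ^d with the sup norm |i| = max_{1≤k≤d} |i_k|. Let a:ℕ→[0,∞) be nonincreasing with ∑_{i∈ℤ^d} a(|i|) < ∞. Then there exist a nonincreasing function b:ℕ→[0,∞) with a(k) ≤ b(k) for all k∈ℕ, ∑_{i∈ℤ^d} b(|i|) < ∞, and a constant C>0 such that for every j∈ℤ^d, ∑_{i∈ℤ^d} b(|i|) a(|i−j|) ≤ C b(|j|). -/

import Mathlib

open Set Filter Topology

/-- Lattice points of `ℤ^d`. -/
abbrev Zd (d : ℕ) := Fin d → ℤ

/-- Sup norm on `ℤ^d`: `|i| = max_k |i_k|` (as a natural number). -/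
def supNorm (d : ℕ) (i : Zd d) : ℕ := Finset.univ.sup fun k => (i k).natAbs

def Tmap (d k : ℕ) (i : Zd d) : Zd d := fun l => (i l).sign * ((i l).natAbs / 2^k : ℕ)

lemma natAbs_Tmap (d k : ℕ) (i : Zd d) (l : Fin d) :
    (Tmap d k i l).natAbs = (i l).natAbs / 2^k := by
  unfold Tmap
  rw [Int.natAbs_mul, Int.natAbs_sign, Int.natAbs_natCast]
  rcases eq_or_ne (i l) 0 with h | h
  · simp [h]
  · rw [if_neg h, one_mul]

lemma supNorm_Tmap (d k : ℕ) (i : Zd d) :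
    supNorm d (Tmap d k i) = supNorm d i / 2^k := by
  unfold supNorm
  have h := Finset.comp_sup_eq_sup_comp (s := (Finset.univ : Finset (Fin d)))
    (f := fun l => (i l).natAbs) (fun m => m / 2^k)
    (fun x y => Monotone.map_max (fun a b hab => Nat.div_le_div_right hab))
    (Nat.zero_div _)
  show (Finset.univ.sup fun l => (Tmap d k i l).natAbs)
    = (fun m => m / 2^k) (Finset.univ.sup fun l => (i l).natAbs)
  beta_reduce; rw [h]
  apply Finset.sup_congr rfl
  intro l _
  exact natAbs_Tmap d k i l

lemma Tmap_residue (k : ℕ) (x : ℤ) :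
    x - 2^k * (x.sign * ((x.natAbs / 2^k : ℕ))) ∈ Finset.Icc (-(2^k:ℤ)) (2^k) := by
  simp only [Finset.mem_Icc]
  have hmod := Nat.div_add_mod x.natAbs (2^k)
  have hlt : x.natAbs % 2^k < 2^k := Nat.mod_lt _ ((by positivity))
  have h1 : (2^k:ℤ) * ((x.natAbs/2^k : ℕ)) + ((x.natAbs % 2^k : ℕ)) = (x.natAbs:ℤ) := by
    exact_mod_cast hmod
  have h2 : ((x.natAbs % 2^k : ℕ):ℤ) < 2^k := by exact_mod_cast hlt
  have h3 : (0:ℤ) ≤ ((x.natAbs % 2^k : ℕ):ℤ) := Int.natCast_nonneg _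
  have h4 : (0:ℤ) < 2^k := by positivity
  rcases lt_trichotomy x 0 with h | h | h
  · rw [Int.sign_eq_neg_one_of_neg h]
    have hx : ((x.natAbs:ℤ)) = -x := Int.ofNat_natAbs_of_nonpos h.le
    rw [hx] at h1
    constructor <;> nlinarith
  · subst h
    norm_num
  · rw [Int.sign_eq_one_of_pos h]
    have hx : ((x.natAbs:ℤ)) = x := Int.natAbs_of_nonneg h.le
    rw [hx] at h1
    constructor <;> nlinarith

lemma tsum_scaled_le (d k : ℕ) (A : ℕ → ENNReal) :
    ∑' i : Zd d, A (supNorm d i / 2^k) ≤ (2:ENNReal)^((k+2)*d) * ∑' i : Zd d, A (supNorm d i) := by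
  classical
  set box : Finset (Zd d) := Fintype.piFinset fun _ => Finset.Icc (-(2^k:ℤ)) (2^k) with hbox
  set g : Zd d × Zd d → ENNReal := fun p => if p.2 ∈ box then A (supNorm d p.1) else 0 with hg
  set Φ : Zd d → Zd d × Zd d := fun i => (Tmap d k i, fun l => i l - 2^k * Tmap d k i l) with hΦ
  have hinj : Function.Injective Φ := by
    intro i i' h
    have h1 : Tmap d k i = Tmap d k i' := congrArg Prod.fst h
    have h2 := congrArg Prod.snd h
    funext l
    have h3 := congrFun h2 l
    simp only [hΦ] at h3
    rw [h1] at h3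
    omega
  have hmem : ∀ i : Zd d, (Φ i).2 ∈ box := by
    intro i
    rw [hbox, Fintype.mem_piFinset]
    intro l
    exact Tmap_residue k (i l)
  have step1 : ∀ i : Zd d, A (supNorm d i / 2^k) = g (Φ i) := by
    intro i
    rw [hg]
    simp only [hmem i, if_true]
    rw [supNorm_Tmap]
  have step2 : ∑' i : Zd d, A (supNorm d i / 2^k) ≤ ∑' p, g p := by
    calc ∑' i : Zd d, A (supNorm d i / 2^k) = ∑' i, g (Φ i) := by
          exact tsum_congr step1
      _ ≤ ∑' p, g p := Summable.tsum_le_tsum_of_inj Φ hinj (fun c _ => zero_le)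
          (fun i => le_rfl) ENNReal.summable ENNReal.summable
  have step3 : ∑' p : Zd d × Zd d, g p = (box.card : ENNReal) * ∑' q : Zd d, A (supNorm d q) := by
    rw [ENNReal.tsum_prod (f := fun q r => if r ∈ box then A (supNorm d q) else 0)]
    have : ∀ q : Zd d, ∑' r : Zd d, g (q, r) = (box.card : ENNReal) * A (supNorm d q) := by
      intro q
      calc ∑' r : Zd d, g (q, r) = ∑ r ∈ box, g (q, r) := by
            apply tsum_eq_sum
            intro r hr
            simp only [hg, hr, if_false]
        _ = ∑ _r ∈ box, A (supNorm d q) :=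
            Finset.sum_congr rfl (fun r hr => by simp only [hg]; rw [if_pos hr])
        _ = (box.card : ENNReal) * A (supNorm d q) := by
            rw [Finset.sum_const, nsmul_eq_mul]
    rw [tsum_congr this, ENNReal.tsum_mul_left]
  have hcard : (box.card : ENNReal) ≤ (2:ENNReal)^((k+2)*d) := by
    have h1 : box.card = (2^(k+1)+1)^d := by
      rw [hbox, Fintype.card_piFinset]
      simp only [Int.card_Icc]
      have heq : ((2:ℤ)^k + 1 - -(2^k)) = ((2^(k+1) + 1 : ℕ) : ℤ) := by push_cast; ring
      rw [heq, Int.toNat_natCast, Finset.prod_const, Finset.card_univ, Fintype.card_fin]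
    have h2 : (2^(k+1)+1)^d ≤ 2^((k+2)*d) := by
      rw [pow_mul]
      apply Nat.pow_le_pow_left
      have : 2^(k+2) = 2^(k+1) + 2^(k+1) := by rw [pow_succ]; ring
      have h3 : 1 ≤ 2^(k+1) := Nat.one_le_two_pow
      omega
    rw [h1]
    calc ((((2^(k+1)+1)^d : ℕ)) : ENNReal) ≤ ((2^((k+2)*d) : ℕ) : ENNReal) := by
          exact_mod_cast Nat.cast_le.mpr h2
      _ = (2:ENNReal)^((k+2)*d) := by push_cast; ring
  calc ∑' i : Zd d, A (supNorm d i / 2^k) ≤ ∑' p, g p := step2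
    _ = (box.card : ENNReal) * ∑' q : Zd d, A (supNorm d q) := step3
    _ ≤ (2:ENNReal)^((k+2)*d) * ∑' i : Zd d, A (supNorm d i) :=
        mul_le_mul_left hcard _


noncomputable def th (d : ℕ) : ℝ := ((2:ℝ)^(d+1))⁻¹

noncomputable def bfun (d : ℕ) (a : ℕ → ℝ) (n : ℕ) : ℝ :=
  (Finset.range (n+1)).sup' (by simp) (fun k => (th d)^k * a (n / 2^k))

lemma th_pos (d : ℕ) : 0 < th d := by unfold th; positivity

lemma th_le_one (d : ℕ) : th d ≤ 1 := by
  rw [th, inv_le_one_iff₀]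
  right; exact one_le_pow₀ (by norm_num)

lemma bfun_ge (d : ℕ) (a : ℕ → ℝ) (ha0 : 0 ≤ a 0) (n k : ℕ) :
    (th d)^k * a (n / 2^k) ≤ bfun d a n := by
  unfold bfun
  rcases le_or_gt k n with h | h
  · exact Finset.le_sup' (fun k => (th d)^k * a (n / 2^k)) (Finset.mem_range.2 (Nat.lt_succ_of_le h))
  · have h1 : n / 2^k = 0 := Nat.div_eq_of_lt (lt_of_lt_of_le (Nat.lt_two_pow_self)
      (Nat.pow_le_pow_right (by norm_num) h.le))
    have h2 : n / 2^n = 0 := Nat.div_eq_of_lt (Nat.lt_two_pow_self)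
    calc (th d)^k * a (n / 2^k) = (th d)^k * a 0 := by rw [h1]
      _ ≤ (th d)^n * a 0 := by
          apply mul_le_mul_of_nonneg_right _ ha0
          exact pow_le_pow_of_le_one (th_pos d).le (th_le_one d) h.le
      _ = (th d)^n * a (n / 2^n) := by rw [h2]
      _ ≤ _ := Finset.le_sup' (fun k => (th d)^k * a (n / 2^k)) (Finset.mem_range.2 (Nat.lt_succ_of_le le_rfl))

lemma bfun_witness (d : ℕ) (a : ℕ → ℝ) (n : ℕ) :
    ∃ k, bfun d a n = (th d)^k * a (n / 2^k) := by
  obtain ⟨k, -, hk⟩ := Finset.exists_mem_eq_sup' (s := Finset.range (n+1)) (by simp)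
    (fun k => (th d)^k * a (n / 2^k))
  exact ⟨k, hk⟩

lemma a_le_bfun (d : ℕ) (a : ℕ → ℝ) (ha0 : 0 ≤ a 0) (n : ℕ) : a n ≤ bfun d a n := by
  have := bfun_ge d a ha0 n 0
  simpa using this

lemma bfun_nonneg (d : ℕ) (a : ℕ → ℝ) (ha0 : ∀ k, 0 ≤ a k) (n : ℕ) : 0 ≤ bfun d a n :=
  le_trans (ha0 n) (a_le_bfun d a (ha0 0) n)

lemma bfun_antitone (d : ℕ) (a : ℕ → ℝ) (ha0 : ∀ k, 0 ≤ a k) (hamono : Antitone a) :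
    Antitone (bfun d a) := by
  intro n m hnm
  obtain ⟨k, hk⟩ := bfun_witness d a m
  rw [hk]
  calc (th d)^k * a (m / 2^k) ≤ (th d)^k * a (n / 2^k) := by
        apply mul_le_mul_of_nonneg_left (hamono (Nat.div_le_div_right hnm))
        exact pow_nonneg (th_pos d).le k
    _ ≤ _ := bfun_ge d a (ha0 0) n k

lemma bfun_doubling (d : ℕ) (a : ℕ → ℝ) (ha0 : ∀ k, 0 ≤ a k) (n : ℕ) :
    th d * bfun d a (n / 2) ≤ bfun d a n := by
  obtain ⟨k, hk⟩ := bfun_witness d a (n / 2)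
  rw [hk]
  have h : n / 2 / 2^k = n / 2^(k+1) := by
    rw [Nat.div_div_eq_div_mul, pow_succ, mul_comm]
  calc th d * ((th d)^k * a (n / 2 / 2^k)) = (th d)^(k+1) * a (n / 2^(k+1)) := by
        rw [h]; ring
    _ ≤ _ := bfun_ge d a (ha0 0) n (k+1)

lemma bfun_summable (d : ℕ) (a : ℕ → ℝ) (ha0 : ∀ k, 0 ≤ a k)
    (hasum : Summable fun i : Zd d => a (supNorm d i)) :
    Summable fun i : Zd d => bfun d a (supNorm d i) := by
  set A : ℕ → ENNReal := fun n => ENNReal.ofReal (a n) with hA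
  set S : ENNReal := ∑' i : Zd d, A (supNorm d i) with hS
  have hSne : S ≠ ⊤ := by
    rw [hS]
    rw [← ENNReal.ofReal_tsum_of_nonneg (fun i => ha0 _) hasum]
    exact ENNReal.ofReal_ne_top
  have hth2 : ENNReal.ofReal (th d) = ((2:ENNReal)^(d+1))⁻¹ := by
    have hp : (0:ℝ) < 2^(d+1) := by positivity
    rw [th, ENNReal.ofReal_inv_of_pos hp, ENNReal.ofReal_pow (by norm_num)]
    norm_num
  have key : ∀ i : Zd d, ENNReal.ofReal (bfun d a (supNorm d i)) ≤
      ∑' k : ℕ, (ENNReal.ofReal (th d))^k * A (supNorm d i / 2^k) := by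
    intro i
    obtain ⟨k₀, hk₀⟩ := bfun_witness d a (supNorm d i)
    rw [hk₀, ENNReal.ofReal_mul (pow_nonneg (th_pos d).le k₀), ENNReal.ofReal_pow (th_pos d).le]
    exact ENNReal.le_tsum k₀
  have hstep : ∀ k : ℕ, (ENNReal.ofReal (th d))^k * (2:ENNReal)^((k+2)*d)
      = (2:ENNReal)^(2*d) * ((2:ENNReal)⁻¹)^k := by
    intro k
    have hne0 : ((2:ENNReal)^(k*d)) ≠ 0 := pow_ne_zero _ (by norm_num)
    have hnetop : ((2:ENNReal)^(k*d)) ≠ ⊤ := ENNReal.pow_ne_top ENNReal.ofNat_ne_top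
    have hknetop : ((2:ENNReal)^k) ≠ ⊤ := ENNReal.pow_ne_top ENNReal.ofNat_ne_top
    have hcancel : ((2:ENNReal)^(k*d))⁻¹ * (2:ENNReal)^(k*d) = 1 :=
      ENNReal.inv_mul_cancel hne0 hnetop
    have e1 : (d+1)*k = k*d + k := by ring
    have e2 : (k+2)*d = k*d + 2*d := by ring
    rw [hth2, ← ENNReal.inv_pow, ← pow_mul, e1, e2, pow_add, pow_add,
      ENNReal.mul_inv (Or.inl hne0) (Or.inl hnetop)]
    conv_rhs => rw [← ENNReal.inv_pow]
    calc ((2:ENNReal)^(k*d))⁻¹ * ((2:ENNReal)^k)⁻¹ * ((2:ENNReal)^(k*d) * (2:ENNReal)^(2*d))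
        = (((2:ENNReal)^(k*d))⁻¹ * (2:ENNReal)^(k*d)) * ((2:ENNReal)^(2*d) * ((2:ENNReal)^k)⁻¹) := by
          ring
      _ = (2:ENNReal)^(2*d) * ((2:ENNReal)^k)⁻¹ := by rw [hcancel, one_mul]
  have total : ∑' i : Zd d, ENNReal.ofReal (bfun d a (supNorm d i)) ≠ ⊤ := by
    have h1 : ∑' i : Zd d, ENNReal.ofReal (bfun d a (supNorm d i))
        ≤ ∑' (k : ℕ) (i : Zd d), (ENNReal.ofReal (th d))^k * A (supNorm d i / 2^k) := by
      rw [← ENNReal.tsum_comm]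
      exact Summable.tsum_le_tsum key ENNReal.summable ENNReal.summable
    have h2 : ∑' (k : ℕ) (i : Zd d), (ENNReal.ofReal (th d))^k * A (supNorm d i / 2^k)
        ≤ ∑' k : ℕ, (2:ENNReal)^(2*d) * ((2:ENNReal)⁻¹)^k * S := by
      apply Summable.tsum_le_tsum _ ENNReal.summable ENNReal.summable
      intro k
      rw [ENNReal.tsum_mul_left, ← hstep k, mul_assoc]
      exact mul_le_mul_right (tsum_scaled_le d k A) _
    have h3 : ∑' k : ℕ, (2:ENNReal)^(2*d) * ((2:ENNReal)⁻¹)^k * S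
        = (2:ENNReal)^(2*d) * (1 - 2⁻¹)⁻¹ * S := by
      rw [ENNReal.tsum_mul_right, ENNReal.tsum_mul_left, ENNReal.tsum_geometric]
    have h4 : (2:ENNReal)^(2*d) * (1 - 2⁻¹)⁻¹ * S ≠ ⊤ := by
      rw [ENNReal.one_sub_inv_two, inv_inv]
      exact ENNReal.mul_ne_top
        (ENNReal.mul_ne_top (ENNReal.pow_ne_top ENNReal.ofNat_ne_top) ENNReal.ofNat_ne_top) hSne
    rw [h3] at h2
    exact ne_top_of_le_ne_top h4 (le_trans h1 h2)
  have heq : ∀ i : Zd d, (ENNReal.ofReal (bfun d a (supNorm d i))).toReal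
      = bfun d a (supNorm d i) := fun i =>
    ENNReal.toReal_ofReal (bfun_nonneg d a ha0 _)
  have := ENNReal.summable_toReal total
  exact this.congr heq

lemma supNorm_triangle (d : ℕ) (i j : Zd d) :
    supNorm d j ≤ supNorm d i + supNorm d (i - j) := by
  unfold supNorm
  apply Finset.sup_le
  intro l _
  have h : (j l).natAbs ≤ (i l).natAbs + ((i - j) l).natAbs := by
    have he : j l = i l - (i l - j l) := by ring
    calc (j l).natAbs = (i l - (i l - j l)).natAbs := by rw [← he]
      _ ≤ (i l).natAbs + (i l - j l).natAbs := Int.natAbs_sub_le _ _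
  calc (j l).natAbs ≤ (i l).natAbs + ((i - j) l).natAbs := h
    _ ≤ _ := add_le_add
        (Finset.le_sup (f := fun l => (i l).natAbs) (Finset.mem_univ l))
        (Finset.le_sup (f := fun l => ((i - j) l).natAbs) (Finset.mem_univ l))


/-- Let `d ≥ 1` and let `a : ℕ → [0,∞)` be nonincreasing with
`∑_{i∈ℤ^d} a(|i|) < ∞` (sup norm).  Then there exist a nonincreasing `b : ℕ → [0,∞)` with
`a ≤ b`, `∑_{i∈ℤ^d} b(|i|) < ∞`, and a constant `C > 0` such that for every `j ∈ ℤ^d`,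
`∑_{i∈ℤ^d} b(|i|) a(|i-j|) ≤ C b(|j|)`. -/
theorem stmt18 (d : ℕ) (hd : 1 ≤ d) (a : ℕ → ℝ)
    (ha0 : ∀ k, 0 ≤ a k) (hamono : Antitone a)
    (hasum : Summable fun i : Zd d => a (supNorm d i)) :
    ∃ b : ℕ → ℝ, Antitone b ∧ (∀ k, 0 ≤ b k) ∧ (∀ k, a k ≤ b k) ∧
      (Summable fun i : Zd d => b (supNorm d i)) ∧
      ∃ C : ℝ, 0 < C ∧ ∀ j : Zd d,
        (Summable fun i : Zd d => b (supNorm d i) * a (supNorm d (i - j))) ∧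
        (∑' i : Zd d, b (supNorm d i) * a (supNorm d (i - j))) ≤ C * b (supNorm d j) := by
  have hbmono := bfun_antitone d a ha0 hamono
  have hb0 := bfun_nonneg d a ha0
  have hab := fun n => a_le_bfun d a (ha0 0) n
  have hbsum := bfun_summable d a ha0 hasum
  set b := bfun d a with hb
  refine ⟨b, hbmono, hb0, hab, hbsum, ?_⟩
  set Sa := ∑' i : Zd d, a (supNorm d i) with hSa
  set Sb := ∑' i : Zd d, b (supNorm d i) with hSb
  have hSa0 : 0 ≤ Sa := tsum_nonneg (fun i => ha0 _)
  have hSb0 : 0 ≤ Sb := tsum_nonneg (fun i => hb0 _)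
  have hthinv : 0 ≤ (th d)⁻¹ := inv_nonneg.2 (th_pos d).le
  set C : ℝ := (th d)⁻¹ * (Sa + Sb) + 1 with hC
  have hCpos : 0 < C := by
    have h1 : 0 ≤ (th d)⁻¹ * (Sa + Sb) := mul_nonneg hthinv (by linarith)
    rw [hC]; linarith
  refine ⟨C, hCpos, ?_⟩
  intro j
  set n := supNorm d j with hn
  have hhalf : th d * b (n / 2) ≤ b n := bfun_doubling d a ha0 n
  have hbn2 : b (n / 2) ≤ (th d)⁻¹ * b n := by
    have h := mul_le_mul_of_nonneg_left hhalf hthinv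
    rwa [← mul_assoc, inv_mul_cancel₀ (th_pos d).ne', one_mul] at h
  have hKnn : 0 ≤ (th d)⁻¹ * b n := mul_nonneg hthinv (hb0 n)
  have key : ∀ i : Zd d, b (supNorm d i) * a (supNorm d (i - j)) ≤
      ((th d)⁻¹ * b n) * (a (supNorm d (i - j)) + b (supNorm d i)) := by
    intro i
    have htri : n ≤ supNorm d i + supNorm d (i - j) := supNorm_triangle d i j
    rcases le_or_gt n (2 * supNorm d i) with hc | hc
    · have h1 : n / 2 ≤ supNorm d i := by omega
      have h2 : b (supNorm d i) ≤ (th d)⁻¹ * b n := le_trans (hbmono h1) hbn2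
      calc b (supNorm d i) * a (supNorm d (i - j))
          ≤ ((th d)⁻¹ * b n) * a (supNorm d (i - j)) :=
            mul_le_mul_of_nonneg_right h2 (ha0 _)
        _ ≤ _ := mul_le_mul_of_nonneg_left (le_add_of_nonneg_right (hb0 _)) hKnn
    · have h1 : n / 2 ≤ supNorm d (i - j) := by omega
      have h2 : a (supNorm d (i - j)) ≤ (th d)⁻¹ * b n :=
        le_trans (hamono h1) (le_trans (hab _) hbn2)
      calc b (supNorm d i) * a (supNorm d (i - j))
          ≤ b (supNorm d i) * ((th d)⁻¹ * b n) :=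
            mul_le_mul_of_nonneg_left h2 (hb0 _)
        _ = ((th d)⁻¹ * b n) * b (supNorm d i) := by ring
        _ ≤ _ := mul_le_mul_of_nonneg_left (le_add_of_nonneg_left (ha0 _)) hKnn
  have hfun : (fun i : Zd d => a (supNorm d (i - j)))
      = (fun i : Zd d => a (supNorm d i)) ∘ (Equiv.subRight j) := by
    funext i
    simp [Equiv.subRight_apply]
  have htrans : Summable (fun i : Zd d => a (supNorm d (i - j))) := by
    rw [hfun]
    exact (Equiv.subRight j).summable_iff.2 hasum
  have htranseq : (∑' i : Zd d, a (supNorm d (i - j))) = Sa := by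
    rw [hSa, show (fun i : Zd d => a (supNorm d (i - j))) = _ from hfun]
    exact (Equiv.subRight j).tsum_eq (fun i => a (supNorm d i))
  have hsum2 : Summable (fun i : Zd d =>
      ((th d)⁻¹ * b n) * (a (supNorm d (i - j)) + b (supNorm d i))) :=
    (htrans.add hbsum).mul_left _
  have hsummain : Summable (fun i : Zd d => b (supNorm d i) * a (supNorm d (i - j))) :=
    Summable.of_nonneg_of_le (fun i => mul_nonneg (hb0 _) (ha0 _)) key hsum2
  refine ⟨hsummain, ?_⟩
  calc (∑' i : Zd d, b (supNorm d i) * a (supNorm d (i - j)))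
      ≤ ∑' i : Zd d, ((th d)⁻¹ * b n) * (a (supNorm d (i - j)) + b (supNorm d i)) :=
        Summable.tsum_le_tsum key hsummain hsum2
    _ = ((th d)⁻¹ * b n) * (Sa + Sb) := by
        rw [tsum_mul_left, Summable.tsum_add htrans hbsum, htranseq]
    _ = ((th d)⁻¹ * (Sa + Sb)) * b n := by ring
    _ ≤ C * b n := by
        apply mul_le_mul_of_nonneg_right _ (hb0 n)
        rw [hC]; linarith
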